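/- In the emptying process of a duplicate-free list, every removal returns an element of the original list, each element is removed exactly once, and the state after k removals is the original list with the first k removed elements erased. -/

import Mathlib

/-- One removal step: erase `F s` from the state `s`. -/
def remStep {α : Type*} [DecidableEq α] (F : List α → Option α) (s : List α) : List α :=
  match F s with | none => s | some x => s.erase x

/-- The state of the emptying process after `k` removals, starting from `l`. -/
def stateAfter {α : Type*} [DecidableEq α] (F : List α → Option α) (l : List α) (k : ℕ) :
    List α :=
  (remStep F)^[k] l

/-- The sequence of items removed during the first `k` steps of the emptying process. -/
def removedList {α : Type*} [DecidableEq α] (F : List α → Option α) (l : List α) (k : ℕ) :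
    List α :=
  (List.range k).filterMap fun i => F (stateAfter F l i)

lemma stateAfter_succ {α : Type*} [DecidableEq α] (F : List α → Option α) (l : List α) (k : ℕ) :
    stateAfter F l (k + 1) = remStep F (stateAfter F l k) := by
  simp [stateAfter, Function.iterate_succ_apply']

lemma removedList_succ {α : Type*} [DecidableEq α] (F : List α → Option α) (l : List α) (k : ℕ) :
    removedList F l (k + 1) = removedList F l k ++ (F (stateAfter F l k)).toList := by
  rw [removedList, List.range_succ, List.filterMap_append, removedList]
  cases h : F (stateAfter F l k) <;> simp [List.filterMap, h]

lemma key {α : Type*} [DecidableEq α] (F : List α → Option α)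
    (hmem : ∀ m : List α, m.Nodup → m ≠ [] → ∃ x ∈ m, F m = some x)
    (l : List α) (hnd : l.Nodup) :
    ∀ k ≤ l.length, (stateAfter F l k).Sublist l ∧ (stateAfter F l k).length = l.length - k ∧
      (removedList F l k ++ stateAfter F l k).Perm l ∧
      stateAfter F l k = (removedList F l k).foldl (fun s x => s.erase x) l := by
  intro k hk
  induction k with
  | zero => simp [stateAfter, removedList]
  | succ k ih =>
    obtain ⟨hsub, hlen, hperm, hfold⟩ := ih (by omega)
    have hndk : (stateAfter F l k).Nodup := hsub.nodup hnd
    have hne : stateAfter F l k ≠ [] := by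
      intro h
      rw [h] at hlen
      simp at hlen
      omega
    obtain ⟨x, hx, hFx⟩ := hmem _ hndk hne
    have hstep : stateAfter F l (k + 1) = (stateAfter F l k).erase x := by
      rw [stateAfter_succ, remStep, hFx]
    have hrem : removedList F l (k + 1) = removedList F l k ++ [x] := by
      rw [removedList_succ, hFx]; rfl
    refine ⟨?_, ?_, ?_, ?_⟩
    · rw [hstep]; exact List.erase_sublist.trans hsub
    · rw [hstep, List.length_erase_of_mem hx, hlen]; omega
    · rw [hstep, hrem, List.append_assoc]
      refine List.Perm.trans ?_ hperm
      refine List.Perm.append_left _ ?_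
      simpa using (List.perm_cons_erase hx).symm
    · rw [hstep, hrem, List.foldl_append, ← hfold]; rfl
  
theorem stmt17 {α : Type*} [DecidableEq α] (F : List α → Option α)
    (hempty : F [] = none)
    (hmem : ∀ m : List α, m.Nodup → m ≠ [] → ∃ x ∈ m, F m = some x)
    (l : List α) (hnd : l.Nodup) :
    (∀ k < l.length, ∃ x ∈ l, F (stateAfter F l k) = some x) ∧
    (removedList F l l.length).Nodup ∧
    (∀ x ∈ l, x ∈ removedList F l l.length) ∧
    (∀ k ≤ l.length,
      stateAfter F l k = (removedList F l k).foldl (fun s x => s.erase x) l) := by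
  have hfin := key F hmem l hnd l.length le_rfl
  obtain ⟨hsub, hlen, hperm, _⟩ := hfin
  have hstate_nil : stateAfter F l l.length = [] := by
    rw [← List.length_eq_zero_iff]; omega
  rw [hstate_nil, List.append_nil] at hperm
  refine ⟨?_, hperm.symm.nodup hnd, fun x hx => hperm.mem_iff.mpr hx, ?_⟩
  · intro k hk
    obtain ⟨hsubk, hlenk, _, _⟩ := key F hmem l hnd k (le_of_lt hk)
    have hne : stateAfter F l k ≠ [] := by
      intro h; rw [h] at hlenk; simp at hlenk; omega
    obtain ⟨x, hx, hFx⟩ := hmem _ (hsubk.nodup hnd) hne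
    exact ⟨x, hsubk.mem hx, hFx⟩
  · intro k hk
    exact (key F hmem l hnd k hk).2.2.2
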